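/- Let A be a primitive axial algebra of Jordan type η over a field F with char F ≠ 2, generated by a closed set 𝒜 of η-axes with |𝒜| > 1. Then for all a, b ∈ 𝒜, the product satisfies ab = (η/2)a + φ_a(b)·b − (η/2)·a^{τ_b}, where a^{τ_b} is the image of a under the Miyamoto involution τ_b. -/

import Mathlib

universe u v

section Prelim

variable (F : Type u) {A : Type v} [Field F] [NonUnitalNonAssocCommRing A]
  [Module F A] [SMulCommClass F A A] [IsScalarTower F A A]

/-- The λ-eigenspace of the adjoint map `ad_a : x ↦ a * x`. -/
def eigSp (a : A) (l : F) : Submodule F A where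
  carrier := {x | a * x = l • x}
  add_mem' := by
    intro x y hx hy
    simp only [Set.mem_setOf_eq] at *
    rw [mul_add, hx, hy, smul_add]
  zero_mem' := by simp
  smul_mem' := by
    intro c x hx
    simp only [Set.mem_setOf_eq] at *
    rw [mul_smul_comm, hx, smul_smul, smul_smul, mul_comm]

/-- `a` is a (primitive) `η`-axis. -/
structure IsAxis (η : F) (a : A) : Prop where
  ne_zero : a ≠ 0
  idem : a * a = a
  decomp : eigSp F a 1 ⊔ eigSp F a 0 ⊔ eigSp F a η = ⊤
  prim : eigSp F a 1 = Submodule.span F {a}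
  f11 : ∀ x ∈ eigSp F a 1, ∀ y ∈ eigSp F a 1, x * y ∈ eigSp F a 1
  f00 : ∀ x ∈ eigSp F a 0, ∀ y ∈ eigSp F a 0, x * y ∈ eigSp F a 0
  f10 : ∀ x ∈ eigSp F a 1, ∀ y ∈ eigSp F a 0, x * y = 0
  fpe : ∀ x ∈ eigSp F a 1 ⊔ eigSp F a 0, ∀ y ∈ eigSp F a η, x * y ∈ eigSp F a η
  fee : ∀ x ∈ eigSp F a η, ∀ y ∈ eigSp F a η, x * y ∈ eigSp F a 1 ⊔ eigSp F a 0

/-- `τ` is the Miyamoto involution of the `η`-axis `a`. -/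
structure IsMiyamoto (η : F) (a : A) (τ : A → A) : Prop where
  fixes : ∀ x ∈ eigSp F a 1 ⊔ eigSp F a 0, τ x = x
  negates : ∀ x ∈ eigSp F a η, τ x = -x
  map_add : ∀ x y : A, τ (x + y) = τ x + τ y
  map_smul : ∀ (c : F) (x : A), τ (c • x) = c • τ x
  map_mul : ∀ x y : A, τ (x * y) = τ x * τ y
  bijective : Function.Bijective τ

/-- `c = φ_a(u)`, the projection of `u` to `F·a` w.r.t. the axis `a`. -/
def IsProjCoeff (η : F) (a u : A) (c : F) : Prop :=
  ∃ u0 ∈ eigSp F a 0, ∃ ue ∈ eigSp F a η, u = c • a + u0 + ue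

/-- `e` is an identity element of the subalgebra `N`. -/
def IsIdentOf (N : NonUnitalSubalgebra F A) (e : A) : Prop :=
  e ∈ N ∧ ∀ z ∈ N, e * z = z

/-- `ψ` is an `F`-algebra automorphism of `A`. -/
structure IsAlgAut (ψ : A → A) : Prop where
  map_add : ∀ x y : A, ψ (x + y) = ψ x + ψ y
  map_smul : ∀ (c : F) (x : A), ψ (c • x) = c • ψ x
  map_mul : ∀ x y : A, ψ (x * y) = ψ x * ψ y
  bijective : Function.Bijective ψ

/-- The graph `Δ_𝒜`: distinct axes are adjacent iff their product is nonzero. -/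
def axesGraph (𝒜 : Set A) : SimpleGraph 𝒜 where
  Adj x y := x ≠ y ∧ (x : A) * (y : A) ≠ 0
  symm := by
    constructor
    rintro x y ⟨hxy, hm⟩
    exact ⟨hxy.symm, by rwa [mul_comm]⟩
  loopless := by constructor; rintro x ⟨h, -⟩; exact h rfl

/-- Multiplication of the Jordan algebra of Clifford type `J(V,B) = F·e ⊕ V`. -/
def cliffMul {V : Type*} [AddCommGroup V] [Module F V]
    (B : V →ₗ[F] V →ₗ[F] F) (x y : F × V) : F × V :=
  (x.1 * y.1 + B x.2 y.2, x.1 • y.2 + y.1 • x.2)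

end Prelim

/-- An isomorphism of `A` with a Jordan algebra of Clifford type `J(V,B)`. -/
structure CliffordTypeIso (F : Type u) (A : Type v) [Field F]
    [NonUnitalNonAssocCommRing A] [Module F A] [SMulCommClass F A A]
    [IsScalarTower F A A] where
  V : Type v
  [instAdd : AddCommGroup V]
  [instMod : Module F V]
  B : V →ₗ[F] V →ₗ[F] F
  symm : ∀ v w : V, B v w = B w v
  iso : A ≃ₗ[F] F × V
  mul_compat : ∀ x y : A, iso (x * y) = cliffMul F B (iso x) (iso y)
section Aux

set_option linter.unusedSectionVars false

variable {F : Type u} {A : Type v} [Field F] [NonUnitalNonAssocCommRing A]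
  [Module F A] [SMulCommClass F A A] [IsScalarTower F A A]

lemma mem_eigSp' {a x : A} {l : F} : x ∈ eigSp F a l ↔ a * x = l • x := Iff.rfl

lemma smul_cancel' {c : F} (hc : c ≠ 0) {x y : A} (h : c • x = c • y) : x = y := by
  have := congrArg (fun z => c⁻¹ • z) h
  simpa [smul_smul, inv_mul_cancel₀ hc] using this

/-- Uniqueness of components in a `1, 0, η` eigen-decomposition. -/
lemma eig_comp' {η : F} (hη0 : η ≠ 0) (hη1 : η ≠ 1) {a : A} (ha0 : a ≠ 0)
    (haa : a * a = a) {c c' : F} {u u' v v' : A}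
    (hu : u ∈ eigSp F a 0) (hu' : u' ∈ eigSp F a 0)
    (hv : v ∈ eigSp F a η) (hv' : v' ∈ eigSp F a η)
    (h : c • a + u + v = c' • a + u' + v') : c = c' ∧ u = u' ∧ v = v' := by
  have hw : a * (u - u') = 0 := by
    rw [mul_sub, mem_eigSp'.mp hu, mem_eigSp'.mp hu']; simp
  have ht : a * (v - v') = η • (v - v') := by
    rw [mul_sub, mem_eigSp'.mp hv, mem_eigSp'.mp hv', smul_sub]
  have h0 : (c - c') • a + (u - u') + (v - v') = 0 := by
    rw [show (c - c') • a + (u - u') + (v - v')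
        = (c • a + u + v) - (c' • a + u' + v') from by module, h, sub_self]
  have h1 : (c - c') • a + η • (v - v') = 0 := by
    have h1' : a * ((c - c') • a + (u - u') + (v - v')) = 0 := by rw [h0, mul_zero]
    rw [mul_add, mul_add, mul_smul_comm, haa, hw, ht, add_zero] at h1'
    exact h1'
  have h2 : (c - c') • a + (η * η) • (v - v') = 0 := by
    have h2' : a * ((c - c') • a + η • (v - v')) = 0 := by rw [h1, mul_zero]
    rw [mul_add, mul_smul_comm, haa, mul_smul_comm, ht, smul_smul] at h2'
    exact h2'
  have h3 : (η - η * η) • (v - v') = (η - η * η) • (0 : A) := by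
    rw [smul_zero, show (η - η * η) • (v - v')
        = ((c - c') • a + η • (v - v')) - ((c - c') • a + (η * η) • (v - v')) from by
          module, h1, h2, sub_self]
  have hne : η - η * η ≠ 0 := by
    have : η * (1 - η) ≠ 0 := mul_ne_zero hη0 (sub_ne_zero.mpr (Ne.symm hη1))
    intro hcon; apply this; linear_combination hcon
  have hvv : v - v' = 0 := smul_cancel' hne h3
  have hcc : c - c' = 0 := by
    by_contra hcc
    apply ha0
    apply smul_cancel' hcc
    rw [hvv, smul_zero, add_zero] at h1
    rw [h1, smul_zero]
  have huu : u - u' = 0 := by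
    rw [hcc, hvv, zero_smul, zero_add, add_zero] at h0
    exact h0
  exact ⟨sub_eq_zero.mp hcc, sub_eq_zero.mp huu, sub_eq_zero.mp hvv⟩

/-- Key computation: `φ_b(a) · φ_a(b) = φ_a(b)²` for an axis `a` and an
idempotent `b`. -/
lemma key_lemma' (hchar : (2 : F) ≠ 0) {η : F} (hη0 : η ≠ 0) (hη1 : η ≠ 1)
    {a b : A} (ha : IsAxis F η a) (hbb : b * b = b)
    {φ ψ : F} (hφ : IsProjCoeff F η a b φ) (hψ : IsProjCoeff F η b a ψ) :
    ψ * φ = φ * φ := by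
  obtain ⟨x, hx, y, hy, hbdec⟩ := hφ
  obtain ⟨x', hx', y', hy', hadec⟩ := hψ
  have ha0 := ha.ne_zero
  have haa := ha.idem
  have ax : a * x = 0 := by simpa using mem_eigSp'.mp hx
  have xa : x * a = 0 := by rw [mul_comm]; exact ax
  have ay : a * y = η • y := mem_eigSp'.mp hy
  have ya : y * a = η • y := by rw [mul_comm]; exact ay
  have yx : y * x = x * y := mul_comm y x
  have bx' : b * x' = 0 := by simpa using mem_eigSp'.mp hx'
  have x'b : x' * b = 0 := by rw [mul_comm]; exact bx'
  have by' : b * y' = η • y' := mem_eigSp'.mp hy'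
  have y'b : y' * b = η • y' := by rw [mul_comm]; exact by'
  obtain ⟨w1, hw1, z, hz, hwz⟩ := Submodule.mem_sup.mp (ha.fee y hy y hy)
  rw [ha.prim] at hw1
  obtain ⟨α, hα⟩ := Submodule.mem_span_singleton.mp hw1
  have hyy : y * y = α • a + z := by rw [← hwz, hα]
  have hxyη : x * y ∈ eigSp F a η := ha.fpe x (Submodule.mem_sup_right hx) y hy
  have h2inv : (2 : F) * (2 : F)⁻¹ = 1 := mul_inv_cancel₀ hchar
  -- expand b * b = b
  have hbexp : (φ * φ + α) • a + (x * x + z) + ((2 * (φ * η)) • y + (2 : F) • (x * y))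
      = φ • a + x + y := by
    calc (φ * φ + α) • a + (x * x + z) + ((2 * (φ * η)) • y + (2 : F) • (x * y))
        = (φ • a + x + y) * (φ • a + x + y) := by
          simp only [mul_add, add_mul, smul_mul_assoc, mul_smul_comm, haa, ax, xa, ay,
            ya, yx, hyy, smul_zero, add_zero, zero_add]
          module
      _ = b * b := by rw [← hbdec]
      _ = b := hbb
      _ = φ • a + x + y := hbdec
  obtain ⟨hc1, -, hcη⟩ := eig_comp' hη0 hη1 ha0 haa
    (add_mem (ha.f00 x hx x hx) hz) hx
    (add_mem (Submodule.smul_mem _ _ hy) (Submodule.smul_mem _ _ hxyη)) hy hbexp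
  -- hc1 : φ*φ + α = φ ; hcη : (2*(φ*η))•y + 2•(x*y) = y
  have hxy : x * y = ((2 : F)⁻¹ - φ * η) • y := by
    apply smul_cancel' hchar
    calc (2 : F) • (x * y)
        = ((2 * (φ * η)) • y + (2 : F) • (x * y)) - (2 * (φ * η)) • y := by module
      _ = y - (2 * (φ * η)) • y := by rw [hcη]
      _ = (2 : F) • (((2 : F)⁻¹ - φ * η) • y) := by
          match_scalars <;> first | ring1 | linear_combination -h2inv | linear_combination h2inv
  have hby : b * y = α • a + z + (2 : F)⁻¹ • y := by
    calc b * y = (φ • a + x + y) * y := by rw [← hbdec]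
      _ = φ • (a * y) + x * y + y * y := by rw [add_mul, add_mul, smul_mul_assoc]
      _ = α • a + z + (2 : F)⁻¹ • y := by rw [ay, hxy, hyy]; module
  have hab : a * b = φ • a + η • y := by
    calc a * b = a * (φ • a + x + y) := by rw [← hbdec]
      _ = φ • a + η • y := by
          rw [mul_add, mul_add, mul_smul_comm, haa, ax, ay]; module
  have hba : b * a = φ • a + η • y := by rw [mul_comm]; exact hab
  have hab2 : a * b = ψ • b + η • y' := by
    calc a * b = (ψ • b + x' + y') * b := by rw [← hadec]
      _ = ψ • b + η • y' := by
          rw [add_mul, add_mul, smul_mul_assoc, hbb, x'b, y'b]; module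
  have hbab : b * (a * b) = (φ * φ + η * α) • a + η • z + (φ * η + η * (2 : F)⁻¹) • y := by
    rw [hab, mul_add, mul_smul_comm, mul_smul_comm, hba, hby]; module
  have hbab2 : b * (a * b) = ψ • b + (η * η) • y' := by
    rw [hab2, mul_add, mul_smul_comm, mul_smul_comm, hbb, by']; module
  have hfinal : ((1 - η) * ψ * φ) • a + ((1 - η) * ψ) • x + ((1 - η) * ψ) • y
      = (φ * φ + η * α - η * φ) • a + η • z + (φ * η + η * (2 : F)⁻¹ - η * η) • y := by
    have hL : b * (a * b) - η • (a * b) = ((1 - η) * ψ) • b := by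
      rw [hbab2, hab2]; module
    have hR : b * (a * b) - η • (a * b)
        = (φ * φ + η * α - η * φ) • a + η • z + (φ * η + η * (2 : F)⁻¹ - η * η) • y := by
      rw [hbab, hab]; module
    calc ((1 - η) * ψ * φ) • a + ((1 - η) * ψ) • x + ((1 - η) * ψ) • y
        = ((1 - η) * ψ) • b := by rw [hbdec]; module
      _ = _ := by rw [← hL, hR]
  obtain ⟨hcoef, -, -⟩ := eig_comp' hη0 hη1 ha0 haa
    (Submodule.smul_mem _ _ hx) (Submodule.smul_mem _ _ hz)
    (Submodule.smul_mem _ _ hy) (Submodule.smul_mem _ _ hy) hfinal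
  have h1η : (1 - η) ≠ 0 := sub_ne_zero.mpr (Ne.symm hη1)
  have hmain : (1 - η) * (ψ * φ) = (1 - η) * (φ * φ) := by
    linear_combination hcoef + η * hc1
  exact mul_left_cancel₀ h1η hmain

end Aux

/-- If `A` is generated by a closed set `𝒜` of `η`-axes with
`|𝒜| > 1`, then `ab = (η/2)a + φ_a(b)·b − (η/2)·a^{τ_b}` for all `a, b ∈ 𝒜`. -/
theorem product_formula_for_axes
    {F : Type u} {A : Type v} [Field F] [NonUnitalNonAssocCommRing A]
    [Module F A] [SMulCommClass F A A] [IsScalarTower F A A]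
    (hchar : (2 : F) ≠ 0) (η : F) (hη0 : η ≠ 0) (hη1 : η ≠ 1)
    (𝒜 : Set A) (h𝒜 : ∀ a ∈ 𝒜, IsAxis F η a)
    (hgen : NonUnitalAlgebra.adjoin F 𝒜 = ⊤)
    (hclosed : ∀ a ∈ 𝒜, ∀ b ∈ 𝒜, ∀ τ : A → A, IsMiyamoto F η b τ → τ a ∈ 𝒜)
    (hcard : 𝒜.Nontrivial)
    (a : A) (ha : a ∈ 𝒜) (b : A) (hb : b ∈ 𝒜)
    (τb : A → A) (hτb : IsMiyamoto F η b τb)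
    (φ : F) (hφ : IsProjCoeff F η a b φ) :
    a * b = (η / 2) • a + φ • b - (η / 2) • τb a := by
  have axA := h𝒜 a ha
  have axB := h𝒜 b hb
  -- decompose a with respect to the axis b
  have hmemT : a ∈ eigSp F b 1 ⊔ eigSp F b 0 ⊔ eigSp F b η := by
    rw [axB.decomp]; exact Submodule.mem_top
  obtain ⟨p, hp, y', hy', hsum⟩ := Submodule.mem_sup.mp hmemT
  obtain ⟨p1, hp1, x', hx', hsum2⟩ := Submodule.mem_sup.mp hp
  rw [axB.prim] at hp1
  obtain ⟨ψ, hψb⟩ := Submodule.mem_span_singleton.mp hp1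
  have hadec : a = ψ • b + x' + y' := by rw [← hsum, ← hsum2, hψb]
  have hψP : IsProjCoeff F η b a ψ := ⟨x', hx', y', hy', hadec⟩
  -- symmetry of the projection coefficients
  have h1 := key_lemma' hchar hη0 hη1 axA axB.idem hφ hψP
  have h2 := key_lemma' hchar hη0 hη1 axB axA.idem hψP hφ
  have hφψ : φ = ψ := by
    have h3 : (φ - ψ) ^ 2 = 0 := by linear_combination -h1 - h2
    exact sub_eq_zero.mp ((pow_eq_zero_iff (by norm_num : (2:ℕ) ≠ 0)).mp h3)
  -- basic products
  have hbb := axB.idem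
  have bx' : b * x' = 0 := by simpa using mem_eigSp'.mp hx'
  have x'b : x' * b = 0 := by rw [mul_comm]; exact bx'
  have by' : b * y' = η • y' := mem_eigSp'.mp hy'
  have y'b : y' * b = η • y' := by rw [mul_comm]; exact by'
  have hab2 : a * b = ψ • b + η • y' := by
    calc a * b = (ψ • b + x' + y') * b := by rw [← hadec]
      _ = ψ • b + η • y' := by
          rw [add_mul, add_mul, smul_mul_assoc, hbb, x'b, y'b]; module
  -- Miyamoto involution action
  have hbE1 : b ∈ eigSp F b 1 := by rw [mem_eigSp', axB.idem, one_smul]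
  have hfix : τb (ψ • b + x') = ψ • b + x' :=
    hτb.fixes _ (add_mem (Submodule.mem_sup_left (Submodule.smul_mem _ _ hbE1))
      (Submodule.mem_sup_right hx'))
  have hτ : τb a = ψ • b + x' - y' := by
    calc τb a = τb ((ψ • b + x') + y') := by rw [← hadec]
      _ = τb (ψ • b + x') + τb y' := hτb.map_add _ _
      _ = (ψ • b + x') + -y' := by rw [hfix, hτb.negates y' hy']
      _ = ψ • b + x' - y' := by module
  -- final formula
  have h2inv : (2 : F) * (2 : F)⁻¹ = 1 := mul_inv_cancel₀ hchar
  rw [hab2, hφψ, hτ, hadec]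
  match_scalars <;> first | ring1 | linear_combination -η * h2inv | linear_combination η * h2inv
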